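/- Let n, m be integers whose greatest common divisor k satisfies |k| ≥ 2. Then the group ⟨a, b | (ab)^n = (ba)^m⟩ contains a non-abelian free subgroup. -/

import Mathlib

/-- Relation `(ab)^n = (ba)^m`, generators `a = of 0`, `b = of 1`. -/
def relsStmt5 (n m : ℤ) : Set (FreeGroup (Fin 2)) :=
  let a := FreeGroup.of (0 : Fin 2)
  let b := FreeGroup.of (1 : Fin 2)
  {(a * b) ^ n * ((b * a) ^ m)⁻¹}

/-- The shift automorphism action of `ZMod k` on `FreeGroup (ZMod k)`. -/
def shiftPhi (k : ℕ) : Multiplicative (ZMod k) →* MulAut (FreeGroup (ZMod k)) :=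
  MonoidHom.mk' (fun c => FreeGroup.freeGroupCongr (Equiv.addLeft c.toAdd))
    (by
      intro a b
      apply MulEquiv.toMonoidHom_injective
      apply FreeGroup.ext_hom
      intro x
      simp [add_assoc])

section
variable (k : ℕ)

/-- The group `FreeGroup (ZMod k) ⋊ ZMod k`. -/
abbrev GG := SemidirectProduct (FreeGroup (ZMod k)) (Multiplicative (ZMod k)) (shiftPhi k)

def Xel : GG k := SemidirectProduct.inr (Multiplicative.ofAdd (1 : ZMod k))
def Yel : GG k := SemidirectProduct.inl (FreeGroup.of (0 : ZMod k))

lemma Xel_zpow (j : ℤ) (hj : (k : ℤ) ∣ j) : (Xel k) ^ j = 1 := by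
  have : (Xel k) ^ j = SemidirectProduct.inr (Multiplicative.ofAdd ((j : ZMod k))) := by
    rw [Xel, ← map_zpow]
    congr 1
    rw [← ofAdd_zsmul]
    congr 1
    simp
  rw [this]
  obtain ⟨c, rfl⟩ := hj
  simp
end

/-- If `gcd(n, m) ≥ 2`, then `⟨a, b | (ab)^n = (ba)^m⟩` contains a non-abelian
free subgroup (i.e. the free group of rank 2 embeds into it). -/
theorem stmt_5 (n m : ℤ) (h : 2 ≤ Int.gcd n m) :
    ∃ f : FreeGroup (Fin 2) →* PresentedGroup (relsStmt5 n m), Function.Injective f := by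
  set k : ℕ := Int.gcd n m with hk
  haveI : Fact (1 < k) := ⟨h⟩
  haveI : NeZero k := ⟨by omega⟩
  set X := Xel k
  set Y := Yel k
  have hXn : X ^ n = 1 := Xel_zpow k n (by exact_mod_cast Int.gcd_dvd_left n m)
  have hXm : X ^ m = 1 := Xel_zpow k m (by exact_mod_cast Int.gcd_dvd_right n m)
  -- the target assignment in GG k
  set c : Fin 2 → GG k := ![X * Y⁻¹, Y] with hc
  have hrel : ∀ r ∈ relsStmt5 n m, FreeGroup.lift c r = 1 := by
    intro r hr
    simp only [relsStmt5, Set.mem_singleton_iff] at hr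
    subst hr
    have h0 : FreeGroup.lift c (FreeGroup.of (0 : Fin 2)) = X * Y⁻¹ := by simp [hc]
    have h1 : FreeGroup.lift c (FreeGroup.of (1 : Fin 2)) = Y := by simp [hc]
    simp only [map_mul, map_zpow, map_inv, h0, h1]
    have hconj : (Y * (X * Y⁻¹)) ^ m = Y * X ^ m * Y⁻¹ := by
      rw [show Y * (X * Y⁻¹) = Y * X * Y⁻¹ by group, conj_zpow]
    rw [show X * Y⁻¹ * Y = X by group, hconj, hXn, hXm]
    group
  let g : PresentedGroup (relsStmt5 n m) →* GG k := PresentedGroup.toGroup hrel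
  set A : PresentedGroup (relsStmt5 n m) := PresentedGroup.of 0 with hA
  set B : PresentedGroup (relsStmt5 n m) := PresentedGroup.of 1 with hB
  set d : Fin 2 → PresentedGroup (relsStmt5 n m) := ![B, (A * B) * B * (A * B)⁻¹] with hd
  refine ⟨FreeGroup.lift d, ?_⟩
  -- g ∘ f = inl ∘ (lift of images of an injective map)
  have hgA : g A = X * Y⁻¹ := by simp [g, hA, PresentedGroup.toGroup.of, hc]
  have hgB : g B = Y := by simp [g, hB, PresentedGroup.toGroup.of, hc]
  set ι : Fin 2 → ZMod k := ![0, 1] with hι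
  have hcomp : g.comp (FreeGroup.lift d) =
      (SemidirectProduct.inl (φ := shiftPhi k)).comp
        (FreeGroup.lift (fun i => FreeGroup.of (ι i))) := by
    apply FreeGroup.ext_hom
    intro i
    fin_cases i
    · simp only [MonoidHom.comp_apply, FreeGroup.lift_apply_of, hd, hι, Fin.zero_eta,
        Matrix.cons_val_zero, hgB]
      rfl
    · simp only [MonoidHom.comp_apply, FreeGroup.lift_apply_of, hd, hι, Fin.mk_one,
        Matrix.cons_val_one, Matrix.head_cons, Matrix.cons_val_zero, map_mul, map_inv, hgA, hgB]
      rw [show X * Y⁻¹ * Y * Y * (X * Y⁻¹ * Y)⁻¹ = X * Y * X⁻¹ by group]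
      show SemidirectProduct.inr (Multiplicative.ofAdd (1 : ZMod k)) *
          SemidirectProduct.inl (FreeGroup.of (0 : ZMod k)) *
          (SemidirectProduct.inr (Multiplicative.ofAdd (1 : ZMod k)))⁻¹ =
          SemidirectProduct.inl (FreeGroup.of (1 : ZMod k))
      rw [← map_inv, ← SemidirectProduct.inl_aut]
      congr 1
      simp [shiftPhi]
  -- injectivity of the right-hand side
  have hινj : Function.Injective ι := by
    intro i j hij
    fin_cases i <;> fin_cases j <;> revert hij <;> simp [hι]
  have hlinj : Function.Injective (FreeGroup.lift (fun i => FreeGroup.of (ι i))) := by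
    have hli : Function.LeftInverse
        (FreeGroup.lift (fun x : ZMod k => FreeGroup.of (if x = 1 then (1 : Fin 2) else 0)))
        (FreeGroup.lift (fun i => FreeGroup.of (ι i))) := by
      intro w
      have : (FreeGroup.lift (fun x : ZMod k =>
          FreeGroup.of (if x = 1 then (1 : Fin 2) else 0))).comp
          (FreeGroup.lift (fun i => FreeGroup.of (ι i))) = MonoidHom.id _ := by
        apply FreeGroup.ext_hom
        intro i
        fin_cases i <;> simp [hι, one_ne_zero]
      calc _ = ((FreeGroup.lift _).comp (FreeGroup.lift _)) w := rfl
        _ = w := by rw [this]; rfl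
    exact hli.injective
  have : Function.Injective (g.comp (FreeGroup.lift d)) := by
    rw [hcomp]
    exact SemidirectProduct.inl_injective.comp hlinj
  exact Function.Injective.of_comp this
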